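/- Let α, c, σ > 0, set K = 2α³/(cσ²), and let r̂ ∈ (1/2, 1) be the unique solution of l(r̂) = K. For ε ∈ (0,1), let r̄(ε) ∈ (0,1) be the unique solution of l(r̄(ε)) + l((1+ε)/2) = 2K. If (1+ε)/2 < r̂, then 1/(r̄(ε)(1−r̄(ε))) − 4/((1+ε)(1−ε)) > 0; and if (1+ε)/2 = r̂, then r̄(ε) = r̂ = (1+ε)/2 and 1/(r̄(ε)(1−r̄(ε))) − 4/((1+ε)(1−ε)) = 0. (Hence the option value of learning v₀ − 1/2 = (cσ²/(4α²))·[1/(r̄(1−r̄)) − 4/((1+ε)(1−ε))] is strictly positive for ε < 2r̂ − 1 and vanishes continuously at ε = 2r̂ − 1.) -/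

import Mathlib

/-- `l(r) = 2·log(r/(1−r)) − 1/r + 1/(1−r)`. -/
noncomputable def l (r : ℝ) : ℝ := 2 * Real.log (r / (1 - r)) - 1 / r + 1 / (1 - r)

lemma l_hasDerivAt {r : ℝ} (h0 : 0 < r) (h1 : r < 1) :
    HasDerivAt l (2 / r + 2 / (1 - r) + 1 / r ^ 2 + 1 / (1 - r) ^ 2) r := by
  have h1' : 0 < 1 - r := by linarith
  have hlog1 : HasDerivAt (fun x : ℝ => Real.log x) r⁻¹ r := Real.hasDerivAt_log h0.ne'
  have hsub : HasDerivAt (fun x : ℝ => 1 - x) (-1) r := by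
    simpa using (hasDerivAt_id r).const_sub 1
  have hlog2 : HasDerivAt (fun x : ℝ => Real.log (1 - x)) ((1 - r)⁻¹ * (-1)) r :=
    (Real.hasDerivAt_log h1'.ne').comp r hsub
  have hinv1 : HasDerivAt (fun x : ℝ => x⁻¹) (-(r ^ 2)⁻¹) r := hasDerivAt_inv h0.ne'
  have hinv2 : HasDerivAt (fun x : ℝ => (1 - x)⁻¹) (-((1 - r) ^ 2)⁻¹ * (-1)) r :=
    (hasDerivAt_inv h1'.ne').comp r hsub
  have hl2 : HasDerivAt
      (fun x : ℝ => 2 * Real.log x - 2 * Real.log (1 - x) - x⁻¹ + (1 - x)⁻¹)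
      (2 / r + 2 / (1 - r) + 1 / r ^ 2 + 1 / (1 - r) ^ 2) r := by
    have := (((hlog1.const_mul 2).sub (hlog2.const_mul 2)).sub hinv1).add hinv2
    refine this.congr_deriv ?_
    simp only [div_eq_mul_inv]
    ring
  apply hl2.congr_of_eventuallyEq
  have hopen : Set.Ioo (0 : ℝ) 1 ∈ nhds r := (isOpen_Ioo).mem_nhds ⟨h0, h1⟩
  filter_upwards [hopen] with x hx
  have hx1 : 0 < 1 - x := by linarith [hx.2]
  unfold l
  rw [Real.log_div hx.1.ne' hx1.ne']
  ring

lemma l_strictMonoOn : StrictMonoOn l (Set.Ioo (0 : ℝ) 1) := by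
  apply strictMonoOn_of_deriv_pos (convex_Ioo 0 1)
  · intro x hx
    exact (l_hasDerivAt hx.1 hx.2).continuousAt.continuousWithinAt
  · intro x hx
    rw [interior_Ioo] at hx
    rw [(l_hasDerivAt hx.1 hx.2).deriv]
    have h1 : 0 < 1 - x := by linarith [hx.2]
    have h0 := hx.1
    positivity

lemma g_lt {a b : ℝ} (ha : 1 / 2 ≤ a) (hab : a < b) (hb : b < 1) :
    1 / (a * (1 - a)) < 1 / (b * (1 - b)) := by
  have ha0 : 0 < a := by linarith
  have hb1 : 0 < 1 - b := by linarith
  have hpa : 0 < a * (1 - a) := by nlinarith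
  have hpb : 0 < b * (1 - b) := by nlinarith
  rw [div_lt_div_iff₀ hpa hpb]
  nlinarith

theorem stmt_16 (α c σ rhat : ℝ) (rbar : ℝ → ℝ)
    (hα : 0 < α) (hc : 0 < c) (hσ : 0 < σ)
    (hrhat : rhat ∈ Set.Ioo (1 / 2 : ℝ) 1)
    (hrhat_eq : l rhat = 2 * α ^ 3 / (c * σ ^ 2))
    (hrbar : ∀ ε ∈ Set.Ioo (0 : ℝ) 1,
      rbar ε ∈ Set.Ioo (0 : ℝ) 1 ∧
      l (rbar ε) + l ((1 + ε) / 2) = 2 * (2 * α ^ 3 / (c * σ ^ 2))) :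
    ∀ ε ∈ Set.Ioo (0 : ℝ) 1,
      ((1 + ε) / 2 < rhat →
        0 < 1 / (rbar ε * (1 - rbar ε)) - 4 / ((1 + ε) * (1 - ε))) ∧
      ((1 + ε) / 2 = rhat →
        rbar ε = rhat ∧ rhat = (1 + ε) / 2 ∧
        1 / (rbar ε * (1 - rbar ε)) - 4 / ((1 + ε) * (1 - ε)) = 0) := by
  intro ε hε
  obtain ⟨hε0, hε1⟩ := hε
  obtain ⟨hrb_mem, hrb_eq⟩ := hrbar ε ⟨hε0, hε1⟩
  set s : ℝ := (1 + ε) / 2 with hs_def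
  have hs_mem : s ∈ Set.Ioo (0 : ℝ) 1 := ⟨by simp [hs_def]; linarith, by simp [hs_def]; linarith⟩
  have hs_half : 1 / 2 < s := by simp [hs_def]; linarith
  have hrhat_mem : rhat ∈ Set.Ioo (0 : ℝ) 1 := ⟨by linarith [hrhat.1], hrhat.2⟩
  have hseq : 1 / (s * (1 - s)) = 4 / ((1 + ε) * (1 - ε)) := by
    have hps : 0 < s * (1 - s) := by rw [hs_def]; nlinarith
    have hpe : 0 < (1 + ε) * (1 - ε) := by nlinarith
    rw [div_eq_div_iff hps.ne' hpe.ne', hs_def]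
    ring
  constructor
  · intro hlt
    have h1 : l s < l rhat := l_strictMonoOn hs_mem hrhat_mem hlt
    have h2 : l rhat < l (rbar ε) := by linarith
    have h3 : rhat < rbar ε := by
      by_contra h
      push_neg at h
      rcases eq_or_lt_of_le h with h | h
      · rw [h] at h2; linarith
      · linarith [l_strictMonoOn hrb_mem hrhat_mem h]
    have h4 : s < rbar ε := lt_trans hlt h3
    have := g_lt (le_of_lt hs_half) h4 hrb_mem.2
    rw [hseq] at this
    linarith
  · intro heq
    have hK : l s = l rhat := by rw [heq]
    have h1 : l (rbar ε) = l rhat := by linarith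
    have h2 : rbar ε = rhat := l_strictMonoOn.injOn hrb_mem hrhat_mem h1
    refine ⟨h2, heq.symm, ?_⟩
    rw [h2, ← heq, hseq]
    ring
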